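/- Let P be a full-dimensional perfectly centered polytope in ℝ^d. A subset H of P + P* is a nontrivial face of P + P* if and only if H = G + F^D for some nontrivial faces G and F of P with G ⊆ F. -/

import Mathlib

open Pointwise RealInnerProductSpace

noncomputable section

abbrev E (d : ℕ) : Type := EuclideanSpace ℝ (Fin d)

def IsPolytope {d : ℕ} (P : Set (E d)) : Prop :=
  ∃ V : Finset (E d), V.Nonempty ∧ P = convexHull ℝ (V : Set (E d))

def maximizers {d : ℕ} (P : Set (E d)) (c : E d) : Set (E d) :=
  {x ∈ P | ∀ y ∈ P, ⟪y, c⟫ ≤ ⟪x, c⟫}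

def IsFace {d : ℕ} (P F : Set (E d)) : Prop :=
  F = ∅ ∨ F = P ∨ ∃ c : E d, c ≠ 0 ∧ F = maximizers P c

def IsNontrivialFace {d : ℕ} (P F : Set (E d)) : Prop :=
  IsFace P F ∧ F ≠ ∅ ∧ F ≠ P

def polarDual {d : ℕ} (P : Set (E d)) : Set (E d) :=
  {x | ∀ y ∈ P, ⟪x, y⟫ ≤ 1}

def dualFace {d : ℕ} (P F : Set (E d)) : Set (E d) :=
  {x ∈ polarDual P | ∀ f ∈ F, ⟪x, f⟫ = 1}

def normalCone {d : ℕ} (P F : Set (E d)) : Set (E d) :=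
  {c | maximizers P c = F}

def IsPerfectlyCentered {d : ℕ} (P : Set (E d)) : Prop :=
  ∀ F : Set (E d), IsFace P F → F.Nonempty →
    (intrinsicInterior ℝ F ∩ normalCone P F).Nonempty

def dimSet {d : ℕ} (F : Set (E d)) : ℕ :=
  Module.finrank ℝ (affineSpan ℝ F).direction

def fVec {d : ℕ} (P : Set (E d)) (k : ℕ) : ℕ :=
  {F : Set (E d) | IsFace P F ∧ F.Nonempty ∧ dimSet F = k}.ncard

namespace NFaux

variable {d : ℕ}

lemma inner_isLinearMap (c : E d) : IsLinearMap ℝ (fun y : E d => ⟪y, c⟫) :=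
  ⟨fun x y => inner_add_left x y c, fun t x => real_inner_smul_left x c t⟩

lemma inner_le_of_mem_hull {S : Set (E d)} {c : E d} {a : ℝ}
    (h : ∀ v ∈ S, ⟪v, c⟫ ≤ a) {x : E d} (hx : x ∈ convexHull ℝ S) : ⟪x, c⟫ ≤ a :=
  convexHull_min h (convex_halfSpace_le (inner_isLinearMap c) a) hx

/-- argmax vertices -/
def AV (W : Finset (E d)) (c : E d) : Finset (E d) :=
  W.filter (fun v => ∀ x ∈ W, ⟪x, c⟫ ≤ ⟪v, c⟫)

lemma AV_subset (W : Finset (E d)) (c : E d) : AV W c ⊆ W := Finset.filter_subset _ _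

lemma mem_AV_iff {W : Finset (E d)} {c v : E d} :
    v ∈ AV W c ↔ v ∈ W ∧ ∀ x ∈ W, ⟪x, c⟫ ≤ ⟪v, c⟫ := Finset.mem_filter

lemma AV_nonempty {W : Finset (E d)} (hW : W.Nonempty) (c : E d) : (AV W c).Nonempty := by
  obtain ⟨v, hv, hmax⟩ := W.exists_max_image (fun v => ⟪v, c⟫) hW
  exact ⟨v, mem_AV_iff.2 ⟨hv, hmax⟩⟩

lemma AV_inner_eq {W : Finset (E d)} {c v w : E d} (hv : v ∈ AV W c) (hw : w ∈ AV W c) :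
    ⟪v, c⟫ = ⟪w, c⟫ :=
  le_antisymm ((mem_AV_iff.1 hw).2 v (AV_subset W c hv)) ((mem_AV_iff.1 hv).2 w (AV_subset W c hw))

lemma mem_maximizers_iff {P : Set (E d)} {c x : E d} :
    x ∈ maximizers P c ↔ x ∈ P ∧ ∀ y ∈ P, ⟪y, c⟫ ≤ ⟪x, c⟫ := Iff.rfl

lemma maximizers_subset (P : Set (E d)) (c : E d) : maximizers P c ⊆ P := fun _ h => h.1

/-- key structural lemma: maximizers of a polytope -/
lemma maximizers_hull (W : Finset (E d)) (hW : W.Nonempty) (c : E d) :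
    maximizers (convexHull ℝ (W : Set (E d))) c = convexHull ℝ ((AV W c : Finset (E d)) : Set (E d)) := by
  obtain ⟨v₀, hv₀⟩ := AV_nonempty hW c
  have hv₀W : v₀ ∈ W := AV_subset W c hv₀
  have hub : ∀ x ∈ convexHull ℝ (W : Set (E d)), ⟪x, c⟫ ≤ ⟪v₀, c⟫ := by
    intro x hx
    exact inner_le_of_mem_hull (fun v hv => (mem_AV_iff.1 hv₀).2 v hv) hx
  apply Set.Subset.antisymm
  · rintro x ⟨hxP, hxmax⟩
    -- value of x equals max
    have hxval : ⟪x, c⟫ = ⟪v₀, c⟫ := by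
      have h1 : ⟪v₀, c⟫ ≤ ⟪x, c⟫ :=
        hxmax v₀ (subset_convexHull ℝ _ hv₀W)
      exact le_antisymm (hub x hxP) h1
    rw [Finset.convexHull_eq] at hxP
    obtain ⟨w, hw0, hw1, hwx⟩ := hxP
    -- weights vanish off AV
    have hsum : ∑ y ∈ W, w y * (⟪v₀, c⟫ - ⟪y, c⟫) = 0 := by
      have hx' : ∑ y ∈ W, w y * ⟪y, c⟫ = ⟪x, c⟫ := by
        rw [← hwx, Finset.centerMass, hw1]
        simp only [inv_one, one_smul, id]
        rw [sum_inner]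
        apply Finset.sum_congr rfl
        intro y hy
        rw [real_inner_smul_left]
      have : ∑ y ∈ W, w y * ⟪v₀, c⟫ = ⟪v₀, c⟫ := by
        rw [← Finset.sum_mul, hw1, one_mul]
      calc ∑ y ∈ W, w y * (⟪v₀, c⟫ - ⟪y, c⟫)
          = ∑ y ∈ W, (w y * ⟪v₀, c⟫ - w y * ⟪y, c⟫) := by
            apply Finset.sum_congr rfl; intro y hy; ring
        _ = (∑ y ∈ W, w y * ⟪v₀, c⟫) - ∑ y ∈ W, w y * ⟪y, c⟫ := Finset.sum_sub_distrib _ _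
        _ = ⟪v₀, c⟫ - ⟪x, c⟫ := by rw [hx', this]
        _ = 0 := by rw [hxval]; ring
    have hterm : ∀ y ∈ W, w y * (⟪v₀, c⟫ - ⟪y, c⟫) = 0 := by
      refine (Finset.sum_eq_zero_iff_of_nonneg ?_).1 hsum
      intro y hy
      have := hub y (subset_convexHull ℝ _ hy)
      have := hw0 y hy
      nlinarith
    -- x is a combination over AV
    have hzero : ∀ y ∈ W, y ∉ AV W c → w y = 0 := by
      intro y hy hyn
      by_contra hwy
      have h2 : ⟪v₀, c⟫ - ⟪y, c⟫ = 0 := by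
        rcases mul_eq_zero.1 (hterm y hy) with h | h
        · exact absurd h hwy
        · exact h
      apply hyn
      refine mem_AV_iff.2 ⟨hy, ?_⟩
      intro z hz
      have := hub z (subset_convexHull ℝ _ hz)
      linarith
    have hsub : AV W c ⊆ W := AV_subset W c
    have hw1' : ∑ y ∈ AV W c, w y = 1 := by
      rw [← hw1]
      exact Finset.sum_subset hsub (fun y hy hyn => hzero y hy hyn)
    have hwx' : (AV W c).centerMass w id = x := by
      rw [← hwx, Finset.centerMass, Finset.centerMass, hw1, hw1']
      congr 1
      apply Finset.sum_subset hsub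
      intro y hy hyn
      rw [hzero y hy hyn, zero_smul]
    rw [← hwx']
    exact Finset.centerMass_mem_convexHull _ (fun y hy => hw0 y (hsub hy)) (by rw [hw1']; norm_num)
      (fun y hy => Finset.mem_coe.2 hy)
  · intro x hx
    have hxP : x ∈ convexHull ℝ (W : Set (E d)) := convexHull_mono (by exact_mod_cast AV_subset W c) hx
    refine ⟨hxP, ?_⟩
    intro y hy
    have h1 : ⟪x, c⟫ ≤ ⟪v₀, c⟫ := inner_le_of_mem_hull (fun v hv => (mem_AV_iff.1 hv₀).2 v hv) hxP
    have h2 : ⟪x, -c⟫ ≤ ⟪v₀, -c⟫ := by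
      apply inner_le_of_mem_hull (fun v hv => ?_) hx
      rw [inner_neg_right, inner_neg_right, neg_le_neg_iff]
      exact (AV_inner_eq hv₀ hv).le
    rw [inner_neg_right, inner_neg_right, neg_le_neg_iff] at h2
    have hxval : ⟪x, c⟫ = ⟪v₀, c⟫ := le_antisymm h1 h2
    rw [hxval]
    exact hub y hy




lemma maximizers_smul {P : Set (E d)} {c : E d} {t : ℝ} (ht : 0 < t) :
    maximizers P (t • c) = maximizers P c := by
  ext x
  simp only [maximizers, Set.mem_setOf_eq, real_inner_smul_right]
  constructor
  · rintro ⟨hx, h⟩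
    exact ⟨hx, fun y hy => le_of_mul_le_mul_left (h y hy) ht⟩
  · rintro ⟨hx, h⟩
    exact ⟨hx, fun y hy => mul_le_mul_of_nonneg_left (h y hy) ht.le⟩

lemma maximizers_add (A B : Set (E d)) (c : E d) :
    maximizers (A + B) c = maximizers A c + maximizers B c := by
  ext z
  constructor
  · rintro ⟨hz, hmax⟩
    obtain ⟨a, ha, b, hb, rfl⟩ := hz
    refine Set.add_mem_add (a := a) (b := b) ⟨ha, ?_⟩ ⟨hb, ?_⟩
    · intro y hy
      have := hmax (y + b) (Set.add_mem_add hy hb)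
      rw [inner_add_left, inner_add_left] at this
      linarith
    · intro y hy
      have := hmax (a + y) (Set.add_mem_add ha hy)
      rw [inner_add_left, inner_add_left] at this
      linarith
  · rintro ⟨a, ⟨ha, hamax⟩, b, ⟨hb, hbmax⟩, rfl⟩
    refine ⟨Set.add_mem_add ha hb, ?_⟩
    rintro y ⟨a', ha', b', hb', rfl⟩
    rw [inner_add_left, inner_add_left]
    exact add_le_add (hamax a' ha') (hbmax b' hb')

lemma maximizers_pair {P : Set (E d)} {c₁ c₂ : E d} {x₀ : E d}
    (h₁ : x₀ ∈ maximizers P c₁) (h₂ : x₀ ∈ maximizers P c₂) :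
    maximizers P (c₁ + c₂) = maximizers P c₁ ∩ maximizers P c₂ := by
  ext z
  simp only [maximizers, Set.mem_setOf_eq, Set.mem_inter_iff, inner_add_right]
  constructor
  · rintro ⟨hz, h⟩
    have hz₁ : ⟪z, c₁⟫ ≤ ⟪x₀, c₁⟫ := h₁.2 z hz
    have hz₂ : ⟪z, c₂⟫ ≤ ⟪x₀, c₂⟫ := h₂.2 z hz
    have hx₀ : ⟪x₀, c₁⟫ + ⟪x₀, c₂⟫ ≤ ⟪z, c₁⟫ + ⟪z, c₂⟫ := by
      have := h x₀ h₁.1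
      linarith [this]
    have e₁ : ⟪z, c₁⟫ = ⟪x₀, c₁⟫ := by linarith
    have e₂ : ⟪z, c₂⟫ = ⟪x₀, c₂⟫ := by linarith
    exact ⟨⟨hz, fun y hy => e₁ ▸ h₁.2 y hy⟩, ⟨hz, fun y hy => e₂ ▸ h₂.2 y hy⟩⟩
  · rintro ⟨⟨hz, hz₁⟩, ⟨_, hz₂⟩⟩
    exact ⟨hz, fun y hy => add_le_add (hz₁ y hy) (hz₂ y hy)⟩

/-- extension-property relint substitute -/
def extn (F : Set (E d)) (x : E d) : Prop :=
  x ∈ F ∧ ∀ y ∈ F, ∃ δ : ℝ, 0 < δ ∧ x + δ • (x - y) ∈ F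

def extn' (F : Set (E d)) (x : E d) : Prop :=
  x ∈ F ∧ ∀ y : E d, y ∈ affineSpan ℝ F → ∃ δ : ℝ, 0 < δ ∧ x + δ • (x - y) ∈ F

lemma extn'.extn {F : Set (E d)} {x : E d} (h : extn' F x) : extn F x :=
  ⟨h.1, fun y hy => h.2 y (subset_affineSpan ℝ F hy)⟩

/-- T1 : intrinsic interior points have the extension property -/
lemma extn'_of_mem_intrinsicInterior {F : Set (E d)} {x : E d}
    (h : x ∈ intrinsicInterior ℝ F) : extn' F x := by
  obtain ⟨xt, hxt, hxeq⟩ := h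
  have hxF : x ∈ F := by
    have h1 := interior_subset hxt
    rw [← hxeq]; exact h1
  refine ⟨hxF, ?_⟩
  intro y hy
  have hxS : x ∈ affineSpan ℝ F := subset_affineSpan ℝ F hxF
  have hmem : ∀ δ : ℝ, x + δ • (x - y) ∈ affineSpan ℝ F := by
    intro δ
    have h2 := AffineSubspace.smul_vsub_vadd_mem (affineSpan ℝ F) δ hxS hy hxS
    have h3 : δ • (x -ᵥ y) +ᵥ x = x + δ • (x - y) := by
      rw [vsub_eq_sub, vadd_eq_add, add_comm]
    rwa [h3] at h2
  set φ : ℝ → affineSpan ℝ F := fun δ => ⟨x + δ • (x - y), hmem δ⟩ with hφ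
  have hcont : Continuous φ := by
    apply Continuous.subtype_mk
    exact continuous_const.add ((continuous_id.smul continuous_const))
  have hφ0 : φ 0 = xt := by
    apply Subtype.ext
    simp [hφ, hxeq]
  have hpre : IsOpen (φ ⁻¹' interior ((Subtype.val : affineSpan ℝ F → E d) ⁻¹' F)) :=
    isOpen_interior.preimage hcont
  have h0 : (0 : ℝ) ∈ φ ⁻¹' interior ((Subtype.val : affineSpan ℝ F → E d) ⁻¹' F) := by
    simp only [Set.mem_preimage, hφ0]
    exact hxt
  obtain ⟨ε, hε, hball⟩ := Metric.isOpen_iff.1 hpre 0 h0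
  refine ⟨ε / 2, by linarith, ?_⟩
  have hf : φ (ε / 2) ∈ interior ((Subtype.val : affineSpan ℝ F → E d) ⁻¹' F) := by
    apply hball
    simp only [Metric.mem_ball, Real.dist_eq, sub_zero]
    rw [abs_of_pos (by linarith)]
    linarith
  have h1 := interior_subset hf
  exact h1

/-- combination of an extn' point with an arbitrary point stays extn -/
lemma extn_combo {F : Set (E d)} (hF : Convex ℝ F) {x y : E d} {a b : ℝ}
    (hx : extn' F x) (hy : y ∈ F) (ha : 0 < a) (hb : 0 ≤ b) (hab : a + b = 1) :
    extn F (a • x + b • y) := by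
  have hb1 : b = 1 - a := by linarith
  subst hb1
  have hm : a • x + (1 - a) • y ∈ F := hF hx.1 hy ha.le hb hab
  refine ⟨hm, ?_⟩
  intro w hw
  -- w₁ := w + (b/a) • (w − y) ∈ affineSpan F
  have hw₁ : w + ((1 - a) / a) • (w - y) ∈ affineSpan ℝ F := by
    have := AffineSubspace.smul_vsub_vadd_mem (affineSpan ℝ F) ((1 - a) / a)
      (subset_affineSpan ℝ F hw) (subset_affineSpan ℝ F hy) (subset_affineSpan ℝ F hw)
    simpa [vsub_eq_sub, vadd_eq_add, add_comm] using this
  obtain ⟨δ, hδ, hδF⟩ := hx.2 _ hw₁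
  refine ⟨δ, hδ, ?_⟩
  have key : a • x + (1 - a) • y + δ • (a • x + (1 - a) • y - w)
      = a • (x + δ • (x - (w + ((1 - a) / a) • (w - y)))) + (1 - a) • y := by
    have hane : a ≠ 0 := ne_of_gt ha
    match_scalars <;> field_simp <;> ring
  rw [key]
  exact hF hδF hy ha.le hb hab



lemma eq_zero_of_inner_diff_zero {K : Set (E d)} {u : E d} (hu : u ∈ vectorSpan ℝ K)
    (h : ∀ x ∈ K, ∀ y ∈ K, ⟪x - y, u⟫ = 0) : u = 0 := by
  have hz : ∀ v ∈ vectorSpan ℝ K, ⟪v, u⟫ = 0 := by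
    intro v hv
    rw [vectorSpan_def] at hv
    induction hv using Submodule.span_induction with
    | mem v hv =>
      obtain ⟨x, hx, y, hy, rfl⟩ := hv
      exact h x hx y hy
    | zero => simp
    | add v w _ _ hv hw => rw [inner_add_left, hv, hw]; ring
    | smul t v _ hv => rw [real_inner_smul_left, hv]; ring
  have := hz u hu
  exact inner_self_eq_zero.1 this

/-- T2 : supporting functional at a non-relint point, via metric projection -/
lemma exists_support {K : Set (E d)} (hKconv : Convex ℝ K) (hKcl : IsClosed K)
    {r : E d} (hr : r ∈ K) (hne : ¬ extn K r) :
    ∃ w : E d, (∀ x ∈ K, ⟪x, w⟫ ≤ ⟪r, w⟫) ∧ (∃ x ∈ K, ⟪x, w⟫ < ⟪r, w⟫) := by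
  have hKne : K.Nonempty := ⟨r, hr⟩
  -- bad direction
  have hbad : ∃ y ∈ K, ∀ δ : ℝ, 0 < δ → r + δ • (r - y) ∉ K := by
    by_contra hcon
    push_neg at hcon
    exact hne ⟨hr, fun y hy => by
      obtain ⟨δ, hδ, hmem⟩ := hcon y hy
      exact ⟨δ, hδ, hmem⟩⟩
  obtain ⟨y, hy, hbady⟩ := hbad
  -- the sequence of outside points
  set q : ℕ → E d := fun n => r + (1 / (n + 1 : ℝ)) • (r - y) with hq
  have hqn : ∀ n, q n ∉ K := fun n => hbady _ (by positivity)
  have hqdist : ∀ n : ℕ, ‖q n - r‖ = (1 / (n + 1 : ℝ)) * ‖r - y‖ := by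
    intro n
    rw [hq]
    simp only [add_sub_cancel_left]
    rw [norm_smul, Real.norm_eq_abs, abs_of_pos (by positivity)]
  -- projections
  have hproj : ∀ n : ℕ, ∃ v ∈ K, (∀ x ∈ K, ⟪q n - v, x - v⟫ ≤ 0) ∧ ‖q n - v‖ ≤ ‖q n - r‖ := by
    intro n
    obtain ⟨v, hvK, hvdist⟩ :=
      exists_norm_eq_iInf_of_complete_convex hKne (hKcl.isComplete) hKconv (q n)
    refine ⟨v, hvK, ?_, ?_⟩
    · exact fun x hx => (norm_eq_iInf_iff_real_inner_le_zero hKconv hvK).1 hvdist x hx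
    · rw [hvdist]
      exact ciInf_le ⟨0, fun b hb => by obtain ⟨w, rfl⟩ := hb; positivity⟩ (⟨r, hr⟩ : K)
  choose v hvK hvsep hvdist using hproj
  -- v n → r
  have hvlim : Filter.Tendsto v Filter.atTop (nhds r) := by
    rw [tendsto_iff_norm_sub_tendsto_zero]
    have hb : ∀ n : ℕ, ‖v n - r‖ ≤ 2 * ((1 / (n + 1 : ℝ)) * ‖r - y‖) := by
      intro n
      have h1 : ‖v n - r‖ ≤ ‖v n - q n‖ + ‖q n - r‖ := norm_sub_le_norm_sub_add_norm_sub _ _ _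
      have h2 : ‖v n - q n‖ = ‖q n - v n‖ := norm_sub_rev _ _
      have h3 := hvdist n
      have h4 := hqdist n
      rw [h2, h4] at h1
      rw [h4] at h3
      linarith
    have hzero : Filter.Tendsto (fun n : ℕ => 2 * ((1 / (n + 1 : ℝ)) * ‖r - y‖)) Filter.atTop (nhds 0) := by
      have := tendsto_one_div_add_atTop_nhds_zero_nat (𝕜 := ℝ)
      have h2 := this.mul_const ‖r - y‖
      have h3 := h2.const_mul 2
      simpa using h3
    apply squeeze_zero (fun n => norm_nonneg _) hb hzero
  -- normalized directions in the sphere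
  have hwne : ∀ n : ℕ, q n - v n ≠ 0 := by
    intro n h
    apply hqn n
    have : q n = v n := by
      have := sub_eq_zero.1 h; exact this
    rw [this]; exact hvK n
  set u : ℕ → E d := fun n => ‖q n - v n‖⁻¹ • (q n - v n) with hu
  have husph : ∀ n, u n ∈ Metric.sphere (0 : E d) 1 := by
    intro n
    simp only [Metric.mem_sphere, dist_zero_right, hu]
    rw [norm_smul, norm_inv, norm_norm]
    rw [inv_mul_cancel₀ (norm_ne_zero_iff.2 (hwne n))]
  obtain ⟨w, hwsph, φ, hφmono, hφtend⟩ :=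
    (isCompact_sphere (0 : E d) 1).tendsto_subseq husph
  -- w is in the direction of the affine span
  have hdir : w ∈ vectorSpan ℝ K := by
    have hmem : ∀ n, u n ∈ vectorSpan ℝ K := by
      intro n
      apply Submodule.smul_mem
      have hq_mem : q n ∈ affineSpan ℝ K := by
        have h2 := AffineSubspace.smul_vsub_vadd_mem (affineSpan ℝ K) (1 / (n + 1 : ℝ))
          (subset_affineSpan ℝ K hr) (subset_affineSpan ℝ K hy) (subset_affineSpan ℝ K hr)
        have h3 : (1 / (n + 1 : ℝ)) • (r -ᵥ y) +ᵥ r = q n := by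
          rw [vsub_eq_sub, vadd_eq_add, add_comm]
        rwa [h3] at h2
      have := AffineSubspace.vsub_mem_direction hq_mem (subset_affineSpan ℝ K (hvK n))
      rwa [direction_affineSpan, vsub_eq_sub] at this
    have hcl : IsClosed (vectorSpan ℝ K : Set (E d)) := (vectorSpan ℝ K).closed_of_finiteDimensional
    exact hcl.mem_of_tendsto hφtend (Filter.Eventually.of_forall (fun n => hmem (φ n)))
  have hwnorm : ‖w‖ = 1 := by
    have := hwsph
    simpa [Metric.mem_sphere, dist_zero_right] using this
  -- supporting inequality in the limit
  have hsupp : ∀ x ∈ K, ⟪x, w⟫ ≤ ⟪r, w⟫ := by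
    intro x hx
    have hn : ∀ n, ⟪x - v (φ n), u (φ n)⟫ ≤ 0 := by
      intro n
      have h1 := hvsep (φ n) x hx
      rw [hu]
      rw [real_inner_smul_right]
      have h2 : (0:ℝ) ≤ ‖q (φ n) - v (φ n)‖⁻¹ := by positivity
      rw [real_inner_comm] at h1
      nlinarith
    have hlim : Filter.Tendsto (fun n => ⟪x - v (φ n), u (φ n)⟫) Filter.atTop (nhds ⟪x - r, w⟫) := by
      have h1 : Filter.Tendsto (fun n => v (φ n)) Filter.atTop (nhds r) :=
        hvlim.comp hφmono.tendsto_atTop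
      have h2 : Filter.Tendsto (fun n => x - v (φ n)) Filter.atTop (nhds (x - r)) :=
        tendsto_const_nhds.sub h1
      exact Filter.Tendsto.inner h2 hφtend
    have hle : ⟪x - r, w⟫ ≤ 0 := le_of_tendsto hlim (Filter.Eventually.of_forall hn)
    rw [inner_sub_left] at hle
    linarith
  refine ⟨w, hsupp, ?_⟩
  -- strictness
  by_contra hcon
  push_neg at hcon
  have heq : ∀ x ∈ K, ⟪x, w⟫ = ⟪r, w⟫ := fun x hx => le_antisymm (hsupp x hx) (hcon x hx)
  have : w = 0 := by
    apply eq_zero_of_inner_diff_zero hdir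
    intro x hx y' hy'
    rw [inner_sub_left, heq x hx, heq y' hy']
    ring
  rw [this] at hwnorm
  simp at hwnorm

variable {V : Finset (E d)}

local instance : DecidableEq (E d) := Classical.decEq _

lemma hullP_closed (V : Finset (E d)) : IsClosed (convexHull ℝ (V : Set (E d))) :=
  (V.finite_toSet.isCompact_convexHull ℝ).isClosed

lemma maximizers_closed_convex (V : Finset (E d)) (hV : V.Nonempty) (c : E d) :
    IsClosed (maximizers (convexHull ℝ (V : Set (E d))) c) ∧
      Convex ℝ (maximizers (convexHull ℝ (V : Set (E d))) c) := by
  rw [maximizers_hull V hV c]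
  exact ⟨hullP_closed _, convex_convexHull ℝ _⟩

lemma exists_perturb (V : Finset (E d)) (hV : V.Nonempty) (c w : E d) :
    ∃ ε : ℝ, 0 < ε ∧ AV V (c + ε • w) = AV (AV V c) w := by
  obtain ⟨v₀, hv₀⟩ := AV_nonempty hV c
  obtain ⟨w₀, hw₀⟩ := AV_nonempty (AV_nonempty hV c) w
  set A := AV V c with hA
  set M := ⟪v₀, c⟫ with hM
  have hMval : ∀ v ∈ A, ⟪v, c⟫ = M := fun v hv => AV_inner_eq hv hv₀
  have hMub : ∀ v ∈ V, ⟪v, c⟫ ≤ M := fun v hv => (mem_AV_iff.1 hv₀).2 v hv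
  have hw₀A : w₀ ∈ A := AV_subset A w hw₀
  set Ws := ⟪w₀, w⟫ with hWs
  have hWub : ∀ v ∈ A, ⟪v, w⟫ ≤ Ws := fun v hv => (mem_AV_iff.1 hw₀).2 v hv
  -- choose ε
  by_cases hVA : V \ A = ∅
  · -- all vertices are maximizers of c
    have hAV : A = V := by
      apply Finset.Subset.antisymm (AV_subset V c)
      intro v hv
      by_contra hvn
      exact (Finset.eq_empty_iff_forall_notMem.1 hVA v) (Finset.mem_sdiff.2 ⟨hv, hvn⟩)
    refine ⟨1, one_pos, ?_⟩
    ext v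
    rw [mem_AV_iff, mem_AV_iff, hAV]
    constructor
    · rintro ⟨hvV, hmax⟩
      refine ⟨hvV, fun x hx => ?_⟩
      have := hmax x hx
      rw [inner_add_right, inner_add_right, real_inner_smul_right, real_inner_smul_right,
        hMval x (hAV ▸ hx), hMval v (hAV ▸ hvV)] at this
      linarith
    · rintro ⟨hvV, hmax⟩
      refine ⟨hvV, fun x hx => ?_⟩
      rw [inner_add_right, inner_add_right, real_inner_smul_right, real_inner_smul_right,
        hMval x (hAV ▸ hx), hMval v (hAV ▸ hvV)]
      have := hmax x hx
      linarith
  · have hVAne : (V \ A).Nonempty := Finset.nonempty_iff_ne_empty.2 hVA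
    set γ := ((V \ A).image (fun v => M - ⟪v, c⟫)).min' (hVAne.image _) with hγ
    have hγpos : 0 < γ := by
      rw [hγ, Finset.lt_min'_iff]
      intro b hb
      obtain ⟨v, hv, rfl⟩ := Finset.mem_image.1 hb
      have hvV := (Finset.mem_sdiff.1 hv).1
      have hvnA := (Finset.mem_sdiff.1 hv).2
      have hlt : ⟪v, c⟫ < M := by
        rcases lt_or_eq_of_le (hMub v hvV) with h | h
        · exact h
        · exact absurd (mem_AV_iff.2 ⟨hvV, fun x hx => by rw [h]; exact hMub x hx⟩) hvnA
      linarith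
    have hγle : ∀ v ∈ V \ A, γ ≤ M - ⟪v, c⟫ := by
      intro v hv
      exact Finset.min'_le _ _ (Finset.mem_image_of_mem _ hv)
    set D := (V.image (fun v => |⟪v, w⟫|)).max' (hV.image _) with hD
    have hDle : ∀ v ∈ V, |⟪v, w⟫| ≤ D := by
      intro v hv
      rw [hD]
      exact Finset.le_max' _ _ (Finset.mem_image_of_mem (fun v => |⟪v, w⟫|) hv)
    have hD0 : 0 ≤ D := le_trans (abs_nonneg _) (hDle v₀ (AV_subset V c hv₀))
    set ε := γ / (2 * D + 1) with hε
    have hεpos : 0 < ε := by positivity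
    refine ⟨ε, hεpos, ?_⟩
    have key : ∀ v ∈ V \ A, ⟪v, c⟫ + ε * ⟪v, w⟫ < M + ε * Ws := by
      intro v hv
      have h1 := hγle v hv
      have h2 := hDle v (Finset.mem_sdiff.1 hv).1
      have h3 : |Ws| ≤ D := hDle w₀ (AV_subset V c hw₀A)
      have h4 : ε * (2 * D + 1) = γ := by
        rw [hε]; field_simp
      nlinarith [abs_le.1 h2, abs_le.1 h3, hεpos]
    ext v
    rw [mem_AV_iff, mem_AV_iff]
    simp only [inner_add_right, real_inner_smul_right]
    constructor
    · rintro ⟨hvV, hmax⟩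
      have hvval : M + ε * Ws ≤ ⟪v, c⟫ + ε * ⟪v, w⟫ := by
        have := hmax w₀ (AV_subset V c hw₀A)
        rw [hMval w₀ hw₀A] at this
        linarith
      have hvA : v ∈ A := by
        by_contra hvn
        have := key v (Finset.mem_sdiff.2 ⟨hvV, hvn⟩)
        linarith
      refine ⟨hvA, fun x hx => ?_⟩
      have hxval : ⟪x, c⟫ = M := hMval x hx
      have hvval2 : ⟪v, c⟫ = M := hMval v hvA
      have hWsv : Ws ≤ ⟪v, w⟫ := by
        rw [hvval2] at hvval
        nlinarith [hεpos]
        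
      calc ⟪x, w⟫ ≤ Ws := hWub x hx
        _ ≤ ⟪v, w⟫ := hWsv
    · rintro ⟨hvA, hmax⟩
      have hvV : v ∈ V := AV_subset V c hvA
      have hvw : ⟪v, w⟫ = Ws := le_antisymm (hWub v hvA) (hmax w₀ hw₀A)
      refine ⟨hvV, fun x hx => ?_⟩
      by_cases hxA : x ∈ A
      · rw [hMval x hxA, hMval v hvA, hvw]
        have := hWub x hxA
        nlinarith [hεpos]
      · have := key x (Finset.mem_sdiff.2 ⟨hx, hxA⟩)
        rw [hMval v hvA, hvw]
        linarith

lemma minimal_face (hV : V.Nonempty) :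
    ∀ (n : ℕ) (c : E d), (AV V c).card ≤ n →
    ∀ r ∈ maximizers (convexHull ℝ (V : Set (E d))) c,
    ∃ c', extn (maximizers (convexHull ℝ (V : Set (E d))) c') r ∧
      maximizers (convexHull ℝ (V : Set (E d))) c' ⊆ maximizers (convexHull ℝ (V : Set (E d))) c ∧
      (AV V c').card ≤ (AV V c).card ∧
      (¬ extn (maximizers (convexHull ℝ (V : Set (E d))) c) r → (AV V c').card < (AV V c).card) := by
  intro n
  induction n with
  | zero =>
    intro c hc r hr
    have := (AV_nonempty hV c).card_pos
    omega
  | succ n ih =>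
    intro c hc r hr
    by_cases hx : extn (maximizers (convexHull ℝ (V : Set (E d))) c) r
    · exact ⟨c, hx, subset_rfl, le_rfl, fun h => absurd hx h⟩
    · obtain ⟨hcl, hcv⟩ := maximizers_closed_convex V hV c
      obtain ⟨w, hsupp, xh, hxhK, hstrict⟩ := exists_support hcv hcl hr hx
      obtain ⟨ε, hεpos, hAVeq⟩ := exists_perturb V hV c w
      have hKc' : maximizers (convexHull ℝ (V : Set (E d))) (c + ε • w)
          = convexHull ℝ ((AV (AV V c) w : Finset (E d)) : Set (E d)) := by
        rw [maximizers_hull V hV, hAVeq]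
      have hKw : maximizers (maximizers (convexHull ℝ (V : Set (E d))) c) w
          = convexHull ℝ ((AV (AV V c) w : Finset (E d)) : Set (E d)) := by
        rw [maximizers_hull V hV c]
        exact maximizers_hull (AV V c) (AV_nonempty hV c) w
      have hrK : r ∈ maximizers (convexHull ℝ (V : Set (E d))) (c + ε • w) := by
        rw [hKc', ← hKw]
        exact ⟨hr, fun y hy => hsupp y hy⟩
      have hsub1 : maximizers (convexHull ℝ (V : Set (E d))) (c + ε • w)
          ⊆ maximizers (convexHull ℝ (V : Set (E d))) c := by
        rw [hKc', maximizers_hull V hV c]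
        exact convexHull_mono (by exact_mod_cast AV_subset (AV V c) w)
      have hstrictcard : (AV V (c + ε • w)).card < (AV V c).card := by
        rw [hAVeq]
        apply Finset.card_lt_card
        refine ⟨AV_subset (AV V c) w, ?_⟩
        intro hconteq
        have heq : AV (AV V c) w = AV V c :=
          Finset.Subset.antisymm (AV_subset (AV V c) w) hconteq
        have hKfull : maximizers (maximizers (convexHull ℝ (V : Set (E d))) c) w
            = maximizers (convexHull ℝ (V : Set (E d))) c := by
          rw [hKw, heq, ← maximizers_hull V hV c]
        have hxh' : xh ∈ maximizers (maximizers (convexHull ℝ (V : Set (E d))) c) w := by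
          rw [hKfull]; exact hxhK
        have := hxh'.2 r hr
        linarith
      have hcard : (AV V (c + ε • w)).card ≤ n := by omega
      obtain ⟨c', h1, h2, h3, h4⟩ := ih (c + ε • w) hcard r hrK
      exact ⟨c', h1, h2.trans hsub1, by omega, fun _ => by omega⟩

lemma maximizers_zero (P : Set (E d)) : maximizers P 0 = P := by
  ext x
  simp [maximizers, mem_maximizers_iff]

lemma value_lt {P F' : Set (E d)} {u x y : E d} (hx : x ∈ maximizers P u) (hyP : y ∈ P)
    (hy : y ∉ maximizers P u) : ⟪y, u⟫ < ⟪x, u⟫ := by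
  by_contra h
  push_neg at h
  exact hy ⟨hyP, fun w hw => le_trans (hx.2 w hw) h⟩

section Club

variable {V : Finset (E d)}

set_option maxHeartbeats 1000000 in
lemma club (hV : V.Nonempty)
    (hpc : ∀ F : Set (E d), IsFace (convexHull ℝ (V : Set (E d))) F → F.Nonempty →
      (intrinsicInterior ℝ F ∩ normalCone (convexHull ℝ (V : Set (E d))) F).Nonempty) :
    ∀ (n : ℕ) (c : E d), (AV V c).card ≤ n → ∀ z : E d,
      extn (maximizers (convexHull ℝ (V : Set (E d))) c) z →
      maximizers (convexHull ℝ (V : Set (E d))) z ⊆ maximizers (convexHull ℝ (V : Set (E d))) c := by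
  intro n
  induction n with
  | zero =>
    intro c hc
    have := (AV_nonempty hV c).card_pos
    omega
  | succ n ih =>
    intro c hc z hz
    set P := convexHull ℝ (V : Set (E d)) with hPdef
    set F := maximizers P c with hFdef
    have hFface : IsFace P F := by
      by_cases hc0 : c = 0
      · subst hc0
        rw [hFdef, maximizers_zero]
        exact Or.inr (Or.inl rfl)
      · exact Or.inr (Or.inr ⟨c, hc0, rfl⟩)
    have hFne : F.Nonempty := ⟨z, hz.1⟩
    obtain ⟨u, huInt, huN⟩ := hpc F hFface hFne
    have huF : maximizers P u = F := huN
    have huFmem : u ∈ F := intrinsicInterior_subset huInt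
    have huP : u ∈ P := (maximizers_subset P c) huFmem
    have humax : u ∈ maximizers P u := by rw [huF]; exact huFmem
    have huu : ∀ x ∈ F, ⟪x, u⟫ = ⟪u, u⟫ := by
      intro x hx
      have hxmax : x ∈ maximizers P u := by rw [huF]; exact hx
      exact le_antisymm (humax.2 x (hxmax.1)) (hxmax.2 u huP)
    by_cases hzu : z = u
    · subst hzu
      rw [huF]
    -- reduce to vertices
    have hFconv : Convex ℝ F := (maximizers_closed_convex V hV c).2
    have hFclosed : IsClosed F := (maximizers_closed_convex V hV c).1
    suffices hAVz : ∀ v ∈ AV V z, v ∈ F by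
      rw [show maximizers P z = convexHull ℝ ((AV V z : Finset (E d)) : Set (E d)) from
        maximizers_hull V hV z]
      exact convexHull_min (fun v hv => hAVz v hv) hFconv
    intro v hvAV
    by_contra hvF
    have hvV : v ∈ V := AV_subset V z hvAV
    have hvP : v ∈ P := subset_convexHull ℝ _ hvV
    have hvmax : v ∈ maximizers P z :=
      ⟨hvP, fun y hy => inner_le_of_mem_hull (fun x hx => (mem_AV_iff.1 hvAV).2 x hx) hy⟩
    -- ψ0 < 0
    have hψ0 : ⟪v, u⟫ < ⟪u, u⟫ := by
      have := value_lt (F' := F) humax hvP (by rw [huF]; exact hvF)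
      exact this
    -- β
    obtain ⟨xs, hxsA, hxsmax⟩ := (AV V c).exists_max_image (fun x => ⟪x, z - u⟫) (AV_nonempty hV c)
    set β := ⟪xs, z - u⟫ with hβdef
    have hFhull : F = convexHull ℝ ((AV V c : Finset (E d)) : Set (E d)) := maximizers_hull V hV c
    have hβub : ∀ x ∈ F, ⟪x, z - u⟫ ≤ β := by
      intro x hx
      rw [hFhull] at hx
      exact inner_le_of_mem_hull hxsmax hx
    have hxsF : xs ∈ F := by
      rw [hFhull]; exact subset_convexHull ℝ _ hxsA
    have hxsP : xs ∈ P := (maximizers_subset P c) hxsF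
    -- ψ1 ≥ 0 : ⟪u,u⟫ + β ≤ ⟪v,z⟫
    have hsplit : ∀ x : E d, ⟪x, z⟫ = ⟪x, u⟫ + ⟪x, z - u⟫ := by
      intro x
      rw [← inner_add_right, add_sub_cancel]
    have hψ1 : ⟪u, u⟫ + β ≤ ⟪v, z⟫ := by
      have h1 := hvmax.2 xs hxsP
      rw [hsplit xs, huu xs hxsF] at h1
      linarith
    -- the segment
    set L : ℝ → E d := fun t => u + t • (z - u) with hL
    have hL1 : L 1 = z := by rw [hL]; simp
    set T := {t : ℝ | 1 ≤ t ∧ L t ∈ F} with hT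
    have hT1 : (1 : ℝ) ∈ T := ⟨le_refl _, by rw [hL1]; exact hz.1⟩
    have hzu' : (0:ℝ) < ‖z - u‖ := by
      rw [norm_pos_iff]
      intro h
      exact hzu (sub_eq_zero.1 h)
    obtain ⟨C, hC⟩ := isBounded_iff_forall_norm_le.1 (V.finite_toSet.isCompact_convexHull ℝ).isBounded
    have hTbdd : BddAbove T := by
      refine ⟨(C + ‖u‖) / ‖z - u‖, ?_⟩
      rintro t ⟨ht1, htF⟩
      have h1 : ‖L t‖ ≤ C := hC _ ((maximizers_subset P c) htF)
      have h2 : ‖t • (z - u)‖ ≤ ‖L t‖ + ‖u‖ := by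
        have := norm_sub_le (L t) u
        have he : L t - u = t • (z - u) := by rw [hL]; simp only; module
        rw [he] at this
        linarith
      rw [norm_smul, Real.norm_eq_abs, abs_of_pos (by linarith : (0:ℝ) < t)] at h2
      rw [le_div_iff₀ hzu']
      nlinarith
    have hTcl : IsClosed T := by
      apply IsClosed.inter
      · exact isClosed_le continuous_const continuous_id
      · exact hFclosed.preimage (continuous_const.add (continuous_id.smul continuous_const))
    set t1 := sSup T with ht1def
    have ht1T : t1 ∈ T := hTcl.csSup_mem ⟨1, hT1⟩ hTbdd
    have ht1ge : 1 ≤ t1 := ht1T.1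
    have hrF : L t1 ∈ F := ht1T.2
    have ht1gt : 1 < t1 := by
      obtain ⟨δ, hδ, hδF⟩ := hz.2 u huFmem
      have hmem : L (1 + δ) ∈ F := by
        have he : L (1 + δ) = z + δ • (z - u) := by
          rw [hL, hL1.symm]
          simp only [hL]
          module
        rw [he]
        exact hδF
      have := le_csSup hTbdd (⟨by linarith, hmem⟩ : (1 + δ) ∈ T)
      linarith
    set r := L t1 with hrdef
    have ht1pos : (0:ℝ) < t1 := by linarith
    have hrnext : ¬ extn F r := by
      rintro ⟨hrF', hrext⟩
      obtain ⟨δ, hδ, hδF⟩ := hrext u huFmem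
      have he : r + δ • (r - u) = L (t1 * (1 + δ)) := by
        rw [hrdef, hL]
        simp only
        module
      rw [he] at hδF
      have hmemT : t1 * (1 + δ) ∈ T := ⟨by nlinarith, hδF⟩
      have := le_csSup hTbdd hmemT
      nlinarith
    -- minimal face at r
    obtain ⟨c', hext_r, hsubF, hcard_le, hcard_lt⟩ := minimal_face hV (n + 1) c hc r hrF
    have hlt := hcard_lt (by rw [← hFdef]; exact hrnext)
    have hcard' : (AV V c').card ≤ n := by omega
    have hsub2 := ih c' hcard' r hext_r
    obtain ⟨m, hm⟩ := AV_nonempty hV r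
    have hmP : m ∈ maximizers P r := by
      rw [maximizers_hull V hV r]
      exact subset_convexHull ℝ _ hm
    have hmF : m ∈ F := hsubF (hsub2 hmP)
    have hvr : ⟪v, r⟫ ≤ ⟪m, r⟫ := hmP.2 v hvP
    have hrsplit : ∀ x : E d, ⟪x, r⟫ = ⟪x, u⟫ + t1 * ⟪x, z - u⟫ := by
      intro x
      rw [hrdef, hL]
      simp only
      rw [inner_add_right, real_inner_smul_right]
    have hmr : ⟪m, r⟫ ≤ ⟪u, u⟫ + t1 * β := by
      rw [hrsplit m, huu m hmF]
      have := hβub m hmF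
      nlinarith
    have hvz : ⟪v, z⟫ = ⟪v, u⟫ + ⟪v, z - u⟫ := hsplit v
    have hvrr : ⟪v, r⟫ = ⟪v, u⟫ + t1 * ⟪v, z - u⟫ := hrsplit v
    have hkey0 : t1 * (⟪u, u⟫ + β - ⟪v, u⟫) ≤ t1 * ⟪v, z - u⟫ := by
      apply mul_le_mul_of_nonneg_left _ (le_of_lt ht1pos)
      linarith
    have hkey : t1 * ⟪u, u⟫ + t1 * β - t1 * ⟪v, u⟫ ≤ t1 * ⟪v, z - u⟫ := by nlinarith [hkey0]
    have hprod := mul_pos (show (0:ℝ) < ⟪u, u⟫ - ⟪v, u⟫ by linarith)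
      (show (0:ℝ) < t1 - 1 by linarith)
    have hprod' : 0 < t1 * ⟪u, u⟫ - ⟪u, u⟫ - t1 * ⟪v, u⟫ + ⟪v, u⟫ := by nlinarith [hprod]
    linarith [hvr, hmr, hvrr, hkey, hprod']

end Club

end NFaux

namespace NFaux2
open NFaux

variable {d : ℕ} {V : Finset (E d)}

lemma dual_face (hV : V.Nonempty) (h0 : extn (convexHull ℝ (V : Set (E d))) 0)
    {c : E d} {τ : ℝ} (hτ : 0 < τ) (hp : τ • c ∈ convexHull ℝ (V : Set (E d)))
    (hmax : ∀ t : ℝ, τ < t → t • c ∉ convexHull ℝ (V : Set (E d)))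
    {F : Set (E d)} (hFP : F ⊆ convexHull ℝ (V : Set (E d))) (hpF : extn F (τ • c)) :
    maximizers (polarDual (convexHull ℝ (V : Set (E d)))) c
      = dualFace (convexHull ℝ (V : Set (E d))) F := by
  set P := convexHull ℝ (V : Set (E d)) with hPdef
  set p := τ • c with hpdef
  clear_value p
  have hpnotext : ¬ extn P p := by
    rintro ⟨hpP, hpext⟩
    obtain ⟨δ, hδ, hmem⟩ := hpext 0 h0.1
    have he : p + δ • (p - 0) = ((1 + δ) * τ) • c := by
      rw [hpdef]; module
    rw [he] at hmem
    exact hmax _ (by nlinarith) hmem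
  obtain ⟨c₀, hc₀supp, xh, hxhP, hstrict⟩ :=
    exists_support (convex_convexHull ℝ _) (hullP_closed V) hp hpnotext
  set μ := ⟪p, c₀⟫ with hμdef
  have hμ0 : 0 ≤ μ := by
    have := hc₀supp 0 h0.1
    rw [inner_zero_left] at this
    linarith
  have hμpos : 0 < μ := by
    rcases lt_or_eq_of_le hμ0 with h | h
    · exact h
    · exfalso
      obtain ⟨δ, hδ, hmem⟩ := h0.2 xh hxhP
      have he : (0 : E d) + δ • (0 - xh) = (-δ) • xh := by module
      rw [he] at hmem
      have h1 := hc₀supp _ hmem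
      rw [real_inner_smul_left] at h1
      rw [← h] at h1
      nlinarith
  have hub : ∀ x ∈ polarDual P, ⟪x, c⟫ ≤ 1 / τ := by
    intro x hx
    have h1 : ⟪x, p⟫ ≤ 1 := hx p hp
    rw [hpdef, real_inner_smul_right] at h1
    rw [le_div_iff₀ hτ]
    linarith [h1]
  have hx₀dual : (μ⁻¹ • c₀) ∈ polarDual P := by
    intro y hy
    have h1 : ⟪y, c₀⟫ ≤ μ := hc₀supp y hy
    rw [real_inner_smul_left]
    rw [real_inner_comm]
    calc μ⁻¹ * ⟪y, c₀⟫ ≤ μ⁻¹ * μ := by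
          apply mul_le_mul_of_nonneg_left h1 (by positivity)
      _ = 1 := inv_mul_cancel₀ (ne_of_gt hμpos)
  have hx₀val : ⟪μ⁻¹ • c₀, c⟫ = 1 / τ := by
    have h1 : ⟪c₀, p⟫ = μ := by rw [real_inner_comm]
    rw [hpdef, real_inner_smul_right] at h1
    rw [real_inner_smul_left]
    have hτne : τ ≠ 0 := ne_of_gt hτ
    have hc₀c : ⟪c₀, c⟫ = μ / τ := by
      rw [eq_div_iff hτne]
      linear_combination h1
    rw [hc₀c]
    field_simp
  have hchar : ∀ x : E d, x ∈ maximizers (polarDual P) c ↔ x ∈ polarDual P ∧ ⟪x, c⟫ = 1 / τ := by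
    intro x
    constructor
    · rintro ⟨hx, hmaxx⟩
      refine ⟨hx, le_antisymm (hub x hx) ?_⟩
      have := hmaxx _ hx₀dual
      rw [hx₀val] at this
      linarith
    · rintro ⟨hx, hval⟩
      exact ⟨hx, fun y hy => by rw [hval]; exact hub y hy⟩
  ext x
  rw [hchar]
  constructor
  · rintro ⟨hx, hval⟩
    have hxp : ⟪x, p⟫ = 1 := by
      rw [hpdef, real_inner_smul_right, hval]
      field_simp
    refine ⟨hx, ?_⟩
    intro f hf
    obtain ⟨δ, hδ, hq⟩ := hpF.2 f hf
    have hqP : p + δ • (p - f) ∈ P := hFP hq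
    have h1 : ⟪x, p + δ • (p - f)⟫ ≤ 1 := hx _ hqP
    have heq : ⟪x, p + δ • (p - f)⟫ = ⟪x, p⟫ + δ * (⟪x, p⟫ - ⟪x, f⟫) := by
      rw [inner_add_right, real_inner_smul_right, inner_sub_right]
    rw [heq, hxp] at h1
    have h2 : ⟪x, f⟫ ≤ 1 := hx f (hFP hf)
    by_contra hne
    have h3 : ⟪x, f⟫ < 1 := lt_of_le_of_ne h2 hne
    nlinarith
  · rintro ⟨hx, hface⟩
    refine ⟨hx, ?_⟩
    have hxp : ⟪x, p⟫ = 1 := hface p hpF.1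
    rw [hpdef, real_inner_smul_right] at hxp
    rw [eq_div_iff (ne_of_gt hτ)]
    linear_combination hxp

end NFaux2


namespace NFaux3
open NFaux NFaux2

variable {d : ℕ} {V : Finset (E d)}

lemma vectorSpan_top (hfull : affineSpan ℝ (convexHull ℝ (V : Set (E d))) = ⊤) :
    vectorSpan ℝ (convexHull ℝ (V : Set (E d))) = ⊤ := by
  rw [← direction_affineSpan, hfull]
  exact AffineSubspace.direction_top ℝ (E d) (E d)

lemma c_eq_zero_of_max_all (hfull : affineSpan ℝ (convexHull ℝ (V : Set (E d))) = ⊤)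
    {c : E d} (h : ∀ x ∈ convexHull ℝ (V : Set (E d)),
      x ∈ maximizers (convexHull ℝ (V : Set (E d))) c) : c = 0 := by
  apply eq_zero_of_inner_diff_zero (K := convexHull ℝ (V : Set (E d)))
  · rw [vectorSpan_top hfull]; trivial
  · intro x hx y hy
    have h1 := (h x hx).2 y hy
    have h2 := (h y hy).2 x hx
    rw [inner_sub_left]
    linarith

lemma zero_relint (hV : V.Nonempty)
    (hfull : affineSpan ℝ (convexHull ℝ (V : Set (E d))) = ⊤)
    (hpc : IsPerfectlyCentered (convexHull ℝ (V : Set (E d)))) :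
    extn' (convexHull ℝ (V : Set (E d))) 0 := by
  set P := convexHull ℝ (V : Set (E d)) with hPdef
  obtain ⟨v, hv⟩ := hV
  have hPne : P.Nonempty := ⟨v, subset_convexHull ℝ _ hv⟩
  obtain ⟨u, huI, huN⟩ := hpc P (Or.inr (Or.inl rfl)) hPne
  have huP : maximizers P u = P := huN
  have hu0 : u = 0 := by
    apply eq_zero_of_inner_diff_zero (K := P)
    · rw [vectorSpan_top hfull]; trivial
    · intro x hx y hy
      have hx' : x ∈ maximizers P u := by rw [huP]; exact hx
      have hy' : y ∈ maximizers P u := by rw [huP]; exact hy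
      have h1 := hx'.2 y hy
      have h2 := hy'.2 x hx
      rw [inner_sub_left]
      linarith
  subst hu0
  exact extn'_of_mem_intrinsicInterior huI

lemma exists_exit (h0 : extn' (convexHull ℝ (V : Set (E d))) 0)
    (hfull : affineSpan ℝ (convexHull ℝ (V : Set (E d))) = ⊤) {c : E d} (hc : c ≠ 0) :
    ∃ τ : ℝ, 0 < τ ∧ τ • c ∈ convexHull ℝ (V : Set (E d)) ∧
      ∀ t : ℝ, τ < t → t • c ∉ convexHull ℝ (V : Set (E d)) := by
  set P := convexHull ℝ (V : Set (E d)) with hPdef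
  set S := {t : ℝ | 0 ≤ t ∧ t • c ∈ P} with hSdef
  have hS0 : (0 : ℝ) ∈ S := ⟨le_refl _, by rw [zero_smul]; exact h0.1⟩
  obtain ⟨C, hC⟩ := isBounded_iff_forall_norm_le.1 (V.finite_toSet.isCompact_convexHull ℝ).isBounded
  have hcpos : 0 < ‖c‖ := norm_pos_iff.2 hc
  have hSbdd : BddAbove S := by
    refine ⟨C / ‖c‖, ?_⟩
    rintro t ⟨ht0, htP⟩
    have h1 : ‖t • c‖ ≤ C := hC _ htP
    rw [norm_smul, Real.norm_eq_abs, abs_of_nonneg ht0] at h1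
    rw [le_div_iff₀ hcpos]
    exact h1
  have hScl : IsClosed S := by
    apply IsClosed.inter
    · exact isClosed_le continuous_const continuous_id
    · exact (hullP_closed V).preimage (continuous_id.smul continuous_const)
  set τ := sSup S with hτdef
  have hτS : τ ∈ S := hScl.csSup_mem ⟨0, hS0⟩ hSbdd
  have hτpos : 0 < τ := by
    obtain ⟨δ, hδ, hmem⟩ := h0.2 (-c) (by rw [hfull]; trivial)
    have he : (0 : E d) + δ • (0 - -c) = δ • c := by module
    rw [he] at hmem
    have : δ ∈ S := ⟨hδ.le, hmem⟩
    have := le_csSup hSbdd this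
    linarith
  refine ⟨τ, hτpos, hτS.2, ?_⟩
  intro t ht hmem
  have : t ∈ S := ⟨by linarith, hmem⟩
  have := le_csSup hSbdd this
  linarith

end NFaux3



set_option maxHeartbeats 1000000 in
theorem nontrivial_faces_of_nesterov_rounding {d : ℕ} (P : Set (E d))
    (hP : IsPolytope P) (hfull : affineSpan ℝ P = ⊤)
    (hpc : IsPerfectlyCentered P)
    (H : Set (E d)) (hH : H ⊆ P + polarDual P) :
    IsNontrivialFace (P + polarDual P) H ↔
      ∃ F G : Set (E d), IsNontrivialFace P F ∧ IsNontrivialFace P G ∧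
        G ⊆ F ∧ H = G + dualFace P F := by
  classical
  obtain ⟨V, hV, hPV⟩ := hP
  subst hPV
  set P := convexHull ℝ (V : Set (E d)) with hPdef
  have hpc' : ∀ F : Set (E d), IsFace P F → F.Nonempty →
      (intrinsicInterior ℝ F ∩ normalCone P F).Nonempty := hpc
  have h0 := NFaux3.zero_relint hV hfull hpc
  constructor
  · rintro ⟨hface, hne, hnQ⟩
    rcases hface with h1 | h1 | ⟨c, hc0, hHeq⟩
    · exact absurd h1 hne
    · exact absurd h1 hnQ
    have hsum : H = maximizers P c + maximizers (polarDual P) c := by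
      rw [hHeq, NFaux.maximizers_add]
    have hHne : H.Nonempty := Set.nonempty_iff_ne_empty.2 hne
    obtain ⟨z, hz⟩ := hHne
    rw [hsum] at hz
    obtain ⟨a, ha, b, hb, rfl⟩ := hz
    have hGne : (maximizers P c).Nonempty := ⟨a, ha⟩
    have hGneP : maximizers P c ≠ P := by
      intro h
      apply hc0
      apply NFaux3.c_eq_zero_of_max_all hfull
      intro x hx
      rw [h]
      exact hx
    obtain ⟨τ, hτ, hpP, hmax⟩ := NFaux3.exists_exit h0 hfull hc0
    have hpP0 : τ • c ∈ maximizers P 0 := by rw [NFaux.maximizers_zero]; exact hpP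
    obtain ⟨c', hext, hsubP, _, _⟩ :=
      NFaux.minimal_face hV (NFaux.AV V 0).card 0 (le_refl _) (τ • c) hpP0
    have hFneP : maximizers P c' ≠ P := by
      intro hFP
      have hextP : NFaux.extn P (τ • c) := by rw [← hFP]; exact hext
      obtain ⟨δ, hδ, hmem⟩ := hextP.2 0 h0.1
      have he : τ • c + δ • (τ • c - 0) = ((1 + δ) * τ) • c := by module
      rw [he] at hmem
      exact hmax _ (by nlinarith) hmem
    have hc'0 : c' ≠ 0 := by
      intro h
      apply hFneP
      rw [h, NFaux.maximizers_zero]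
    have hGF : maximizers P c ⊆ maximizers P c' := by
      have h1 := NFaux.club hV hpc' (NFaux.AV V c').card c' (le_refl _) (τ • c) hext
      rwa [NFaux.maximizers_smul hτ] at h1
    have hDF : maximizers (polarDual P) c = dualFace P (maximizers P c') :=
      NFaux2.dual_face hV h0.extn hτ hpP hmax (NFaux.maximizers_subset P c') hext
    refine ⟨maximizers P c', maximizers P c,
      ⟨Or.inr (Or.inr ⟨c', hc'0, rfl⟩), ?_, hFneP⟩,
      ⟨Or.inr (Or.inr ⟨c, hc0, rfl⟩), ?_, hGneP⟩, hGF, ?_⟩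
    · exact Set.nonempty_iff_ne_empty.1 ⟨τ • c, hext.1⟩
    · exact Set.nonempty_iff_ne_empty.1 hGne
    · rw [hsum, hDF]
  · rintro ⟨F, G, ⟨hFface, hFne, hFneP⟩, ⟨hGface, hGne, hGneP⟩, hGF, hHeq⟩
    rcases hFface with h1 | h1 | ⟨cF, hcF0, hFeq⟩
    · exact absurd h1 hFne
    · exact absurd h1 hFneP
    rcases hGface with h2 | h2 | ⟨cG, hcG0, hGeq⟩
    · exact absurd h2 hGne
    · exact absurd h2 hGneP
    have hFnonempty : F.Nonempty := Set.nonempty_iff_ne_empty.2 hFne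
    have hGnonempty : G.Nonempty := Set.nonempty_iff_ne_empty.2 hGne
    obtain ⟨uF, huFI, huFN⟩ := hpc F (Or.inr (Or.inr ⟨cF, hcF0, hFeq⟩)) hFnonempty
    obtain ⟨uG, huGI, huGN⟩ := hpc G (Or.inr (Or.inr ⟨cG, hcG0, hGeq⟩)) hGnonempty
    have huF : maximizers P uF = F := huFN
    have huG : maximizers P uG = G := huGN
    have huFmemF : uF ∈ F := intrinsicInterior_subset huFI
    have huFmax : uF ∈ maximizers P uF := by rw [huF]; exact huFmemF
    have huFP : uF ∈ P := huFmax.1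
    have huGmemG : uG ∈ G := intrinsicInterior_subset huGI
    have huGF : uG ∈ F := hGF huGmemG
    have huGmax : uG ∈ maximizers P uG := by rw [huG]; exact huGmemG
    have huGP : uG ∈ P := huGmax.1
    obtain ⟨g0, hg0⟩ := hGnonempty
    have huF0 : uF ≠ 0 := by
      intro h
      apply hFneP
      rw [← huF, h, NFaux.maximizers_zero]
    have huu : 0 < ⟪uF, uF⟫ :=
      lt_of_le_of_ne real_inner_self_nonneg (fun h => huF0 (inner_self_eq_zero.1 h.symm))
    have hvalG : ⟪uG, uF⟫ = ⟪uF, uF⟫ := by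
      have h1 : uG ∈ maximizers P uF := by rw [huF]; exact huGF
      exact le_antisymm (huFmax.2 uG huGP) (h1.2 uF huFP)
    have hc0 : uG + uF ≠ 0 := by
      intro h
      have h2 : ⟪uG + uF, uF⟫ = 0 := by rw [h, inner_zero_left]
      rw [inner_add_left, hvalG] at h2
      linarith
    have hmxc : maximizers P (uG + uF) = G := by
      have hx₀F : g0 ∈ maximizers P uF := by rw [huF]; exact hGF hg0
      have hx₀G : g0 ∈ maximizers P uG := by rw [huG]; exact hg0
      rw [NFaux.maximizers_pair hx₀G hx₀F, huG, huF]
      exact Set.inter_eq_self_of_subset_left hGF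
    have hpP : (1/2 : ℝ) • (uG + uF) ∈ P := by
      have hcm := (convex_convexHull ℝ (V : Set (E d))) huGP huFP
        (by norm_num : (0:ℝ) ≤ 1/2) (by norm_num : (0:ℝ) ≤ 1/2) (by norm_num : (1/2:ℝ) + 1/2 = 1)
      have he : (1/2 : ℝ) • (uG + uF) = (1/2 : ℝ) • uG + (1/2 : ℝ) • uF := by module
      rw [he]
      exact hcm
    have hmax : ∀ t : ℝ, 1/2 < t → t • (uG + uF) ∉ P := by
      intro t ht hmem
      have h1 := huFmax.2 (t • (uG + uF)) hmem
      have he : ⟪t • (uG + uF), uF⟫ = t * (⟪uG, uF⟫ + ⟪uF, uF⟫) := by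
        rw [real_inner_smul_left, inner_add_left]
      rw [he, hvalG] at h1
      nlinarith
    have hFconv : Convex ℝ F := by
      rw [hFeq]
      exact (NFaux.maximizers_closed_convex V hV cF).2
    have hpF : NFaux.extn F ((1/2 : ℝ) • (uG + uF)) := by
      have h1 := NFaux.extn_combo hFconv (NFaux.extn'_of_mem_intrinsicInterior huFI) huGF
        (by norm_num : (0:ℝ) < 1/2) (by norm_num : (0:ℝ) ≤ 1/2) (by norm_num : (1/2:ℝ) + 1/2 = 1)
      have he : (1/2 : ℝ) • (uG + uF) = (1/2 : ℝ) • uF + (1/2 : ℝ) • uG := by module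
      rw [he]
      exact h1
    have hDF := NFaux2.dual_face hV h0.extn (by norm_num : (0:ℝ) < 1/2) hpP hmax
      (by rw [hFeq]; exact NFaux.maximizers_subset P cF) hpF
    have hHQ : H = maximizers (P + polarDual P) (uG + uF) := by
      rw [hHeq, NFaux.maximizers_add, hmxc, hDF]
    have h0dual : (0 : E d) ∈ polarDual P := by
      intro y hy
      rw [inner_zero_left]
      norm_num
    have hx₀ : (⟪uF, uF⟫⁻¹ • uF) ∈ dualFace P F := by
      constructor
      · intro y hy
        have h1 : ⟪y, uF⟫ ≤ ⟪uF, uF⟫ := huFmax.2 y hy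
        rw [real_inner_smul_left]
        calc ⟪uF, uF⟫⁻¹ * ⟪uF, y⟫ = ⟪uF, uF⟫⁻¹ * ⟪y, uF⟫ := by rw [real_inner_comm uF y]
          _ ≤ ⟪uF, uF⟫⁻¹ * ⟪uF, uF⟫ := mul_le_mul_of_nonneg_left h1 (by positivity)
          _ = 1 := inv_mul_cancel₀ (ne_of_gt huu)
      · intro f hf
        have hfmax : f ∈ maximizers P uF := by rw [huF]; exact hf
        have h1 : ⟪f, uF⟫ = ⟪uF, uF⟫ := le_antisymm (huFmax.2 f hfmax.1) (hfmax.2 uF huFP)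
        rw [real_inner_smul_left, real_inner_comm f uF, h1, inv_mul_cancel₀ (ne_of_gt huu)]
    refine ⟨Or.inr (Or.inr ⟨uG + uF, hc0, hHQ⟩), ?_, ?_⟩
    · apply Set.nonempty_iff_ne_empty.1
      rw [hHeq]
      exact ⟨g0 + ⟪uF, uF⟫⁻¹ • uF, Set.add_mem_add hg0 hx₀⟩
    · intro hEQ
      apply hc0
      apply NFaux.eq_zero_of_inner_diff_zero (K := P)
      · rw [NFaux3.vectorSpan_top hfull]; trivial
      · intro x hx y hy
        have hxQ : x ∈ P + polarDual P := by
          have := Set.add_mem_add hx h0dual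
          rwa [add_zero] at this
        have hyQ : y ∈ P + polarDual P := by
          have := Set.add_mem_add hy h0dual
          rwa [add_zero] at this
        have hx' : x ∈ maximizers (P + polarDual P) (uG + uF) := by
          rw [← hHQ, hEQ]; exact hxQ
        have hy' : y ∈ maximizers (P + polarDual P) (uG + uF) := by
          rw [← hHQ, hEQ]; exact hyQ
        have h1 := hx'.2 y hyQ
        have h2 := hy'.2 x hxQ
        rw [inner_sub_left]
        linarith
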